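/- Let d, k ≥ 1, Λ ∈ M_d(ℝ), Θ ∈ M_{d×k}(ℝ), let j ≥ 1, let y : ℝ → ℝ^k be (j−1)-times differentiable, and let x : ℝ → ℝ^d be differentiable with x′(t) = Λ·x(t) + Θ·y(t) for all t ∈ ℝ. Then x is j-times differentiable and its j-th derivative satisfies x⁽ʲ⁾(t) = Λʲ·x(t) + Σ_{m=0}^{j−1} Λ^{j−1−m}·Θ·y⁽ᵐ⁾(t) for all t ∈ ℝ. -/

import Mathlib

open Matrix

private lemma hasDerivAt_mulVec_comp {n m : ℕ} (A : Matrix (Fin n) (Fin m) ℝ)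
    {f : ℝ → Fin m → ℝ} {f' : Fin m → ℝ} {t : ℝ} (hf : HasDerivAt f f' t) :
    HasDerivAt (fun s => A.mulVec (f s)) (A.mulVec f') t := by
  have h := (A.mulVecLin.toContinuousLinearMap.hasFDerivAt
      (x := f t)).comp_hasDerivAt t hf
  simpa [Function.comp_def] using h

private lemma aux {d k : ℕ}
    (Λ : Matrix (Fin d) (Fin d) ℝ) (Θ : Matrix (Fin d) (Fin k) ℝ)
    (y : ℝ → (Fin k → ℝ)) (x : ℝ → (Fin d → ℝ))
    (hx : ∀ t : ℝ, HasDerivAt x (Λ.mulVec (x t) + Θ.mulVec (y t)) t)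
    (n : ℕ) (hy : ∀ m < n, Differentiable ℝ (iteratedDeriv m y)) :
    (∀ m < n + 1, Differentiable ℝ (iteratedDeriv m x)) ∧
      ∀ t : ℝ,
        iteratedDeriv (n + 1) x t =
          (Λ ^ (n + 1)).mulVec (x t) +
            ∑ m ∈ Finset.range (n + 1),
              (Λ ^ (n - m)).mulVec (Θ.mulVec (iteratedDeriv m y t)) := by
  induction n with
  | zero =>
      constructor
      · intro m hm
        interval_cases m
        rw [iteratedDeriv_zero]
        exact fun t => (hx t).differentiableAt
      · intro t
        rw [iteratedDeriv_one, (hx t).deriv]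
        simp [Finset.sum_range_one]
  | succ n ih =>
      obtain ⟨Hd, Hf⟩ := ih (fun m hm => hy m (Nat.lt_succ_of_lt hm))
      -- key derivative computation for iteratedDeriv (n+1) x
      have hform : iteratedDeriv (n + 1) x = fun s =>
          (Λ ^ (n + 1)).mulVec (x s) +
            ∑ m ∈ Finset.range (n + 1),
              (Λ ^ (n - m)).mulVec (Θ.mulVec (iteratedDeriv m y s)) := funext Hf
      have key : ∀ t : ℝ, HasDerivAt (iteratedDeriv (n + 1) x)
          ((Λ ^ (n + 1)).mulVec (Λ.mulVec (x t) + Θ.mulVec (y t)) +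
            ∑ m ∈ Finset.range (n + 1),
              (Λ ^ (n - m)).mulVec (Θ.mulVec (iteratedDeriv (m + 1) y t))) t := by
        intro t
        rw [hform]
        refine HasDerivAt.add (hasDerivAt_mulVec_comp _ (hx t)) ?_
        refine HasDerivAt.fun_sum (fun m hm => ?_)
        refine hasDerivAt_mulVec_comp _ (hasDerivAt_mulVec_comp _ ?_)
        rw [iteratedDeriv_succ]
        exact ((hy m (Finset.mem_range.mp hm)).differentiableAt).hasDerivAt
      constructor
      · intro m hm
        rcases Nat.lt_succ_iff_lt_or_eq.mp hm with h | rfl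
        · exact Hd m h
        · exact fun t => (key t).differentiableAt
      · intro t
        rw [iteratedDeriv_succ, (key t).deriv]
        rw [Finset.sum_range_succ' (fun m =>
          (Λ ^ (n + 1 - m)).mulVec (Θ.mulVec (iteratedDeriv m y t))) (n + 1)]
        simp only [Nat.succ_sub_succ, Nat.sub_zero, iteratedDeriv_zero,
          mulVec_add, mulVec_mulVec]
        rw [show Λ ^ (n + 1 + 1) = Λ ^ (n + 1) * Λ from pow_succ Λ (n + 1)]
        abel

/-- If `x′(t) = Λ x(t) + Θ y(t)` and `y` is `(j−1)`-times differentiable, then `x` is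
`j`-times differentiable and
`x⁽ʲ⁾(t) = Λʲ x(t) + ∑_{m=0}^{j−1} Λ^{j−1−m} Θ y⁽ᵐ⁾(t)`. -/
theorem higher_derivatives_of_linear_ode {d k : ℕ} (hd : 1 ≤ d) (hk : 1 ≤ k)
    (Λ : Matrix (Fin d) (Fin d) ℝ) (Θ : Matrix (Fin d) (Fin k) ℝ)
    (j : ℕ) (hj : 1 ≤ j)
    (y : ℝ → (Fin k → ℝ))
    (hy : ∀ m < j - 1, Differentiable ℝ (iteratedDeriv m y))
    (x : ℝ → (Fin d → ℝ))
    (hx : ∀ t : ℝ, HasDerivAt x (Λ.mulVec (x t) + Θ.mulVec (y t)) t) :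
    (∀ m < j, Differentiable ℝ (iteratedDeriv m x)) ∧
      ∀ t : ℝ,
        iteratedDeriv j x t =
          (Λ ^ j).mulVec (x t) +
            ∑ m ∈ Finset.range j, (Λ ^ (j - 1 - m)).mulVec (Θ.mulVec (iteratedDeriv m y t)) := by
  obtain ⟨n, rfl⟩ : ∃ n, j = n + 1 := ⟨j - 1, (Nat.succ_pred_eq_of_pos hj).symm⟩
  simpa using aux Λ Θ y x hx n (by simpa using hy)
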